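/- Let β > 0, K_σ ≥ 0, K_1 ≥ 0, K_2 > K_σ, R > 0 and let γ : [0,∞) → ℝ be defined by γ(r) = K_1 r for r ≤ R, γ(r) = (−(K_1+K_2)(r−R)/R + K_1) r for R ≤ r ≤ 2R, and γ(r) = −K_2 r for r > 2R. Set γ̃(v) = γ(v) + K_σ v and f(r) = ∫_0^r e^{−(1/(2β))∫_0^u γ̃(v)dv} ∫_u^∞ s e^{(1/(2β))∫_0^s γ̃(v)dv} ds du. Then f'' ≤ 0 on (0,∞) (where defined), f is concave, and (2β/(K_2 − K_σ)) r ≤ f(r) ≤ f'(0) r for all r ≥ 0. -/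

import Mathlib

open MeasureTheory Set Filter Topology

/-- The partially dissipative rate function `γ`. -/
noncomputable def gammaFun (K₁ K₂ R : ℝ) (r : ℝ) : ℝ :=
  if r ≤ R then K₁ * r
  else if r ≤ 2 * R then (-(K₁ + K₂) / R * (r - R) + K₁) * r
  else -K₂ * r

/-- `γ̃(v) = γ(v) + K_σ v`. -/
noncomputable def gammaTilde (K₁ K₂ R Kσ : ℝ) (v : ℝ) : ℝ :=
  gammaFun K₁ K₂ R v + Kσ * v

/-- The reflection-coupling distance function
`f(r) = ∫_0^r e^{−(1/2β)∫_0^u γ̃} ∫_u^∞ s e^{(1/2β)∫_0^s γ̃} ds du`. -/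
noncomputable def refF (β K₁ K₂ R Kσ : ℝ) (r : ℝ) : ℝ :=
  ∫ u in (0 : ℝ)..r,
    Real.exp (-(1 / (2 * β)) * ∫ v in (0 : ℝ)..u, gammaTilde K₁ K₂ R Kσ v) *
      ∫ s in Ioi u,
        s * Real.exp ((1 / (2 * β)) * ∫ v in (0 : ℝ)..s, gammaTilde K₁ K₂ R Kσ v)


noncomputable def GFun (K₁ K₂ R Kσ : ℝ) (u : ℝ) : ℝ := ∫ v in (0:ℝ)..u, gammaTilde K₁ K₂ R Kσ v

noncomputable def psiF (β K₁ K₂ R Kσ : ℝ) (s : ℝ) : ℝ :=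
  s * Real.exp ((1 / (2 * β)) * GFun K₁ K₂ R Kσ s)

noncomputable def hF (β K₁ K₂ R Kσ : ℝ) (u : ℝ) : ℝ := ∫ s in Ioi u, psiF β K₁ K₂ R Kσ s

noncomputable def PhiF (β K₁ K₂ R Kσ : ℝ) (u : ℝ) : ℝ :=
  Real.exp (-(1 / (2 * β)) * GFun K₁ K₂ R Kσ u) * hF β K₁ K₂ R Kσ u


section
variable {β Kσ K₁ K₂ R : ℝ}

lemma gt_cont (hR : 0 < R) : Continuous (gammaTilde K₁ K₂ R Kσ) := by
  have h2 : Continuous fun r : ℝ =>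
      if r ≤ 2 * R then (-(K₁ + K₂) / R * (r - R) + K₁) * r else -K₂ * r := by
    apply Continuous.if_le (by fun_prop) (by fun_prop) continuous_id continuous_const
    intro x hx
    simp only [id_eq] at hx
    subst hx
    field_simp
    ring
  have h1 : Continuous (gammaFun K₁ K₂ R) := by
    unfold gammaFun
    apply Continuous.if_le (by fun_prop) h2 continuous_id continuous_const
    intro x hx
    simp only [id_eq] at hx
    subst hx
    rw [if_pos (by linarith)]
    ring
  unfold gammaTilde
  fun_prop

lemma gt_lb (hKσ : 0 ≤ Kσ) (hK₁ : 0 ≤ K₁) (hK₂ : Kσ < K₂) (hR : 0 < R) {v : ℝ} (hv : 0 ≤ v) :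
    -(K₂ - Kσ) * v ≤ gammaTilde K₁ K₂ R Kσ v := by
  unfold gammaTilde gammaFun
  split_ifs with h1 h2
  · nlinarith
  · rw [← mul_le_mul_iff_of_pos_right hR]
    field_simp
    nlinarith [mul_nonneg (mul_nonneg (by linarith : (0:ℝ) ≤ K₁ + K₂)
      (by linarith : (0:ℝ) ≤ 2 * R - v)) hv]
  · nlinarith

lemma gt_ub (hKσ : 0 ≤ Kσ) (hK₁ : 0 ≤ K₁) (hK₂ : Kσ < K₂) (hR : 0 < R) {v : ℝ} (hv : 0 ≤ v) :
    gammaTilde K₁ K₂ R Kσ v ≤ (K₁ + Kσ) * v := by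
  unfold gammaTilde gammaFun
  split_ifs with h1 h2
  · nlinarith
  · rw [← mul_le_mul_iff_of_pos_right hR]
    field_simp
    nlinarith [mul_nonneg (mul_nonneg (by linarith : (0:ℝ) ≤ K₁ + K₂)
      (by linarith : (0:ℝ) ≤ v - R)) hv]
  · nlinarith

lemma gt_ratio (hKσ : 0 ≤ Kσ) (hK₁ : 0 ≤ K₁) (hK₂ : Kσ < K₂) (hR : 0 < R) {r s : ℝ}
    (hr : 0 ≤ r) (hrs : r ≤ s) :
    r * gammaTilde K₁ K₂ R Kσ s ≤ gammaTilde K₁ K₂ R Kσ r * s := by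
  have hs : 0 ≤ s := le_trans hr hrs
  have hK : (0:ℝ) ≤ K₁ + K₂ := by linarith
  unfold gammaTilde gammaFun
  by_cases hsR : s ≤ R
  · rw [if_pos (hrs.trans hsR), if_pos hsR]
    exact le_of_eq (by ring)
  · push_neg at hsR
    by_cases hs2 : s ≤ 2 * R
    · rw [if_neg (not_le.mpr hsR), if_pos hs2]
      by_cases hrR : r ≤ R
      · rw [if_pos hrR]
        rw [← mul_le_mul_iff_of_pos_right hR]
        field_simp
        nlinarith [mul_nonneg (mul_nonneg (mul_nonneg hK hr) hs)
          (by linarith : (0:ℝ) ≤ s - R)]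
      · rw [if_neg hrR, if_pos (by linarith)]
        rw [← mul_le_mul_iff_of_pos_right hR]
        field_simp
        nlinarith [mul_nonneg (mul_nonneg (mul_nonneg hK hr) hs)
          (by linarith : (0:ℝ) ≤ s - r)]
    · push_neg at hs2
      rw [if_neg (not_le.mpr hsR), if_neg (not_le.mpr hs2)]
      by_cases hrR : r ≤ R
      · rw [if_pos hrR]
        nlinarith [mul_nonneg (mul_nonneg hK hr) hs]
      · by_cases hr2 : r ≤ 2 * R
        · rw [if_neg hrR, if_pos hr2]
          rw [← mul_le_mul_iff_of_pos_right hR]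
          field_simp
          nlinarith [mul_nonneg (mul_nonneg (mul_nonneg hK hr) hs)
            (by linarith : (0:ℝ) ≤ 2 * R - r)]
        · rw [if_neg hrR, if_neg hr2]
          exact le_of_eq (by ring)

lemma gt_tail (hR : 0 < R) {v : ℝ} (hv : 2 * R ≤ v) :
    gammaTilde K₁ K₂ R Kσ v = (Kσ - K₂) * v := by
  unfold gammaTilde gammaFun
  rcases eq_or_lt_of_le hv with h | h
  · subst h
    rw [if_neg (by push_neg; linarith), if_pos le_rfl]
    field_simp
    ring
  · rw [if_neg (by push_neg; linarith), if_neg (by push_neg; linarith)]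
    ring


lemma G_hasDeriv (hR : 0 < R) (u : ℝ) :
    HasDerivAt (GFun K₁ K₂ R Kσ) (gammaTilde K₁ K₂ R Kσ u) u :=
  (intervalIntegral.integral_hasStrictDerivAt_right
    ((gt_cont hR).intervalIntegrable _ _)
    ((gt_cont hR).stronglyMeasurableAtFilter _ _) (gt_cont hR).continuousAt).hasDerivAt

lemma G_cont (hR : 0 < R) : Continuous (GFun K₁ K₂ R Kσ) := by
  have : Differentiable ℝ (GFun K₁ K₂ R Kσ) := fun u => (G_hasDeriv hR u).differentiableAt
  exact this.continuous



lemma G_diff_eq (hR : 0 < R) {r s : ℝ} (hrs : r ≤ s) :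
    GFun K₁ K₂ R Kσ s - GFun K₁ K₂ R Kσ r = ∫ v in r..s, gammaTilde K₁ K₂ R Kσ v := by
  have h := intervalIntegral.integral_add_adjacent_intervals
    ((gt_cont (Kσ := Kσ) (K₁ := K₁) (K₂ := K₂) hR).intervalIntegrable (μ := volume) (0:ℝ) r)
    ((gt_cont (Kσ := Kσ) (K₁ := K₁) (K₂ := K₂) hR).intervalIntegrable (μ := volume) r s)
  unfold GFun
  linarith [h]

lemma G_tail (hR : 0 < R) {s : ℝ} (hs : 2 * R ≤ s) :
    GFun K₁ K₂ R Kσ s = GFun K₁ K₂ R Kσ (2 * R) + (Kσ - K₂) * (s ^ 2 - (2 * R) ^ 2) / 2 := by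
  have h1 := G_diff_eq (K₁ := K₁) (K₂ := K₂) (Kσ := Kσ) hR hs
  have h2 : (∫ v in (2*R)..s, gammaTilde K₁ K₂ R Kσ v) = ∫ v in (2*R)..s, (Kσ - K₂) * v := by
    apply intervalIntegral.integral_congr
    intro v hv
    rw [uIcc_of_le hs] at hv
    exact gt_tail hR hv.1
  rw [h2] at h1
  rw [intervalIntegral.integral_const_mul, integral_id] at h1
  linarith [h1]

lemma G_diff_lb (hKσ : 0 ≤ Kσ) (hK₁ : 0 ≤ K₁) (hK₂ : Kσ < K₂) (hR : 0 < R)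
    {r s : ℝ} (hr : 0 ≤ r) (hrs : r ≤ s) :
    (Kσ - K₂) * (s ^ 2 - r ^ 2) / 2 ≤ GFun K₁ K₂ R Kσ s - GFun K₁ K₂ R Kσ r := by
  rw [G_diff_eq hR hrs]
  have h2 : (∫ v in r..s, (Kσ - K₂) * v) ≤ ∫ v in r..s, gammaTilde K₁ K₂ R Kσ v := by
    apply intervalIntegral.integral_mono_on hrs
      ((by fun_prop : Continuous fun v : ℝ => (Kσ - K₂) * v).intervalIntegrable _ _)
      ((gt_cont hR).intervalIntegrable _ _)
    intro v hv
    have : -(K₂ - Kσ) * v ≤ gammaTilde K₁ K₂ R Kσ v := gt_lb hKσ hK₁ hK₂ hR (hr.trans hv.1)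
    linarith
  rw [intervalIntegral.integral_const_mul, integral_id] at h2
  linarith

/-- `exp (c * G s) → 0` as `s → ∞`, for `c > 0`. -/
lemma exp_G_tendsto (hKσ : 0 ≤ Kσ) (hK₂ : Kσ < K₂) (hR : 0 < R) {c : ℝ} (hc : 0 < c) :
    Tendsto (fun s => Real.exp (c * GFun K₁ K₂ R Kσ s)) atTop (𝓝 0) := by
  have key : Tendsto (fun s : ℝ => c * GFun K₁ K₂ R Kσ s) atTop atBot := by
    have h1 : Tendsto (fun s : ℝ => c * (Kσ - K₂) / 2 * s ^ 2 +
        c * (GFun K₁ K₂ R Kσ (2 * R) - (Kσ - K₂) * (2 * R) ^ 2 / 2)) atTop atBot := by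
      apply tendsto_atBot_add_const_right
      exact (tendsto_pow_atTop two_ne_zero).const_mul_atTop_of_neg
        (by nlinarith : c * (Kσ - K₂) / 2 < 0)
    apply h1.congr'
    filter_upwards [eventually_ge_atTop (2 * R)] with s hs
    rw [G_tail hR hs]
    ring
  exact Real.tendsto_exp_atBot.comp key

/-- integrability of `s ↦ s * exp (-b * s^2)` on `Ioi M`, `M ≥ 0`, `b > 0`. -/
lemma integrable_aux {b M : ℝ} (hb : 0 < b) (hM : 0 ≤ M) :
    IntegrableOn (fun s => s * Real.exp (-b * s ^ 2)) (Ioi M) := by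
  have A : ∀ x : ℝ, HasDerivAt (fun x => -(2 * b)⁻¹ * Real.exp (-b * x ^ 2))
      (x * Real.exp (-b * x ^ 2)) x := by
    intro x
    refine (((hasDerivAt_pow 2 x).const_mul (-b)).exp.const_mul (-(2 * b)⁻¹)).congr_deriv (Eq.symm ?_)
    field_simp
    ring
  have B : Tendsto (fun y : ℝ => -(2 * b)⁻¹ * Real.exp (-b * y ^ 2)) atTop (𝓝 (-(2 * b)⁻¹ * 0)) := by
    refine Tendsto.const_mul _ ?_
    exact Real.tendsto_exp_atBot.comp
      ((tendsto_pow_atTop two_ne_zero).const_mul_atTop_of_neg (neg_lt_zero.2 hb))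
  exact integrableOn_Ioi_deriv_of_nonneg' (fun x _ => A x)
    (fun x hx => mul_nonneg (hM.trans hx.out.le) (Real.exp_pos _).le) B

lemma psi_integrableOn (hβ : 0 < β) (hKσ : 0 ≤ Kσ) (hK₂ : Kσ < K₂) (hR : 0 < R) (a : ℝ) :
    IntegrableOn (psiF β K₁ K₂ R Kσ) (Ioi a) := by
  set c := (1 : ℝ) / (2 * β) with hc
  have hc0 : 0 < c := by positivity
  set M := max a (2 * R) with hM
  have hM2R : 2 * R ≤ M := le_max_right _ _
  have hpsicont : Continuous (psiF β K₁ K₂ R Kσ) := by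
    unfold psiF
    exact continuous_id.mul ((continuous_const.mul (G_cont hR)).rexp)
  have h1 : IntegrableOn (psiF β K₁ K₂ R Kσ) (Ioc a M) :=
    hpsicont.integrableOn_Ioc
  have h2 : IntegrableOn (psiF β K₁ K₂ R Kσ) (Ioi M) := by
    set b := c * (K₂ - Kσ) / 2 with hb
    have hb0 : 0 < b := by have h := sub_pos.mpr hK₂; rw [hb]; positivity
    set D := Real.exp (c * GFun K₁ K₂ R Kσ (2 * R) + b * (2 * R) ^ 2) with hD
    have : IntegrableOn (fun s => D * (s * Real.exp (-b * s ^ 2))) (Ioi M) :=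
      (integrable_aux hb0 (by linarith)).const_mul D
    apply this.congr_fun ?_ measurableSet_Ioi
    intro s hs
    have hs2R : 2 * R ≤ s := hM2R.trans hs.out.le
    simp only [psiF]
    rw [G_tail hR hs2R]
    rw [show D * (s * Real.exp (-b * s ^ 2)) = s * (D * Real.exp (-b * s ^ 2)) by ring, hD,
      ← Real.exp_add]
    congr 2
    rw [hb, hc]
    ring
  exact (h1.union h2).mono_set Ioi_subset_Ioc_union_Ioi


lemma psi_cont (hβ : 0 < β) (hR : 0 < R) : Continuous (psiF β K₁ K₂ R Kσ) := by
  unfold psiF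
  exact continuous_id.mul ((continuous_const.mul (G_cont hR)).rexp)

lemma hF_split (hβ : 0 < β) (hKσ : 0 ≤ Kσ) (hK₂ : Kσ < K₂) (hR : 0 < R) {a b : ℝ} (hab : a ≤ b) :
    hF β K₁ K₂ R Kσ a = (∫ s in a..b, psiF β K₁ K₂ R Kσ s) + hF β K₁ K₂ R Kσ b := by
  rw [intervalIntegral.integral_of_le hab]
  unfold hF
  rw [← setIntegral_union (Ioc_disjoint_Ioi le_rfl) measurableSet_Ioi
    ((psi_integrableOn hβ hKσ hK₂ hR a).mono_set Ioc_subset_Ioi_self)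
    (psi_integrableOn hβ hKσ hK₂ hR b), Ioc_union_Ioi_eq_Ioi hab]

lemma hF_eq (hβ : 0 < β) (hKσ : 0 ≤ Kσ) (hK₂ : Kσ < K₂) (hR : 0 < R) (u : ℝ) :
    hF β K₁ K₂ R Kσ u = hF β K₁ K₂ R Kσ 0 - ∫ s in (0:ℝ)..u, psiF β K₁ K₂ R Kσ s := by
  rcases le_or_gt 0 u with h | h
  · have := hF_split (K₁ := K₁) hβ hKσ hK₂ hR h
    linarith
  · have := hF_split (K₁ := K₁) hβ hKσ hK₂ hR h.le
    rw [intervalIntegral.integral_symm] at this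
    linarith

lemma hF_hasDeriv (hβ : 0 < β) (hKσ : 0 ≤ Kσ) (hK₂ : Kσ < K₂) (hR : 0 < R) (u : ℝ) :
    HasDerivAt (hF β K₁ K₂ R Kσ) (-psiF β K₁ K₂ R Kσ u) u := by
  have heq : hF β K₁ K₂ R Kσ = fun u =>
      hF β K₁ K₂ R Kσ 0 - ∫ s in (0:ℝ)..u, psiF β K₁ K₂ R Kσ s :=
    funext (hF_eq hβ hKσ hK₂ hR)
  rw [heq]
  have h2 : HasDerivAt (fun u => ∫ s in (0:ℝ)..u, psiF β K₁ K₂ R Kσ s)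
      (psiF β K₁ K₂ R Kσ u) u :=
    (intervalIntegral.integral_hasStrictDerivAt_right
      ((psi_cont hβ hR).intervalIntegrable (μ := volume) _ _)
      ((psi_cont hβ hR).stronglyMeasurableAtFilter _ _)
      (psi_cont hβ hR).continuousAt).hasDerivAt
  have h3 := (hasDerivAt_const u (hF β K₁ K₂ R Kσ 0)).sub h2
  simp at h3
  exact h3

lemma Phi_hasDeriv (hβ : 0 < β) (hKσ : 0 ≤ Kσ) (hK₂ : Kσ < K₂) (hR : 0 < R) (u : ℝ) :
    HasDerivAt (PhiF β K₁ K₂ R Kσ)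
      (-(1 / (2 * β)) * gammaTilde K₁ K₂ R Kσ u * PhiF β K₁ K₂ R Kσ u - u) u := by
  have hg : HasDerivAt (fun u => Real.exp (-(1 / (2 * β)) * GFun K₁ K₂ R Kσ u))
      (Real.exp (-(1 / (2 * β)) * GFun K₁ K₂ R Kσ u) *
        (-(1 / (2 * β)) * gammaTilde K₁ K₂ R Kσ u)) u :=
    ((G_hasDeriv hR u).const_mul (-(1 / (2 * β)))).exp
  have hmul := hg.mul (hF_hasDeriv (K₁ := K₁) hβ hKσ hK₂ hR u)
  have key : Real.exp (-(1 / (2 * β)) * GFun K₁ K₂ R Kσ u) *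
      Real.exp ((1 / (2 * β)) * GFun K₁ K₂ R Kσ u) = 1 := by
    rw [← Real.exp_add, show -(1 / (2 * β)) * GFun K₁ K₂ R Kσ u +
      (1 / (2 * β)) * GFun K₁ K₂ R Kσ u = 0 by ring, Real.exp_zero]
  refine hmul.congr_deriv (Eq.symm ?_)
  unfold PhiF psiF
  linear_combination u * key

lemma refF_hasDeriv (hβ : 0 < β) (hKσ : 0 ≤ Kσ) (hK₂ : Kσ < K₂) (hR : 0 < R) (r : ℝ) :
    HasDerivAt (refF β K₁ K₂ R Kσ) (PhiF β K₁ K₂ R Kσ r) r := by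
  have hΦc : Continuous (PhiF β K₁ K₂ R Kσ) := by
    have : ∀ u, HasDerivAt (PhiF β K₁ K₂ R Kσ)
        (-(1 / (2 * β)) * gammaTilde K₁ K₂ R Kσ u * PhiF β K₁ K₂ R Kσ u - u) u :=
      Phi_hasDeriv hβ hKσ hK₂ hR
    have hdiff : Differentiable ℝ (PhiF β K₁ K₂ R Kσ) := fun u => (this u).differentiableAt
    exact hdiff.continuous
  have : refF β K₁ K₂ R Kσ = fun r => ∫ u in (0:ℝ)..r, PhiF β K₁ K₂ R Kσ u := rfl
  rw [this]
  exact (intervalIntegral.integral_hasStrictDerivAt_right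
    (hΦc.intervalIntegrable (μ := volume) _ _)
    (hΦc.stronglyMeasurableAtFilter _ _) hΦc.continuousAt).hasDerivAt

lemma int_gamma_exp (hβ : 0 < β) (hKσ : 0 ≤ Kσ) (hK₁ : 0 ≤ K₁) (hK₂ : Kσ < K₂) (hR : 0 < R)
    {r : ℝ} (hr : 0 ≤ r) :
    IntegrableOn (fun s => gammaTilde K₁ K₂ R Kσ s *
      Real.exp ((1 / (2 * β)) * GFun K₁ K₂ R Kσ s)) (Ioi r) := by
  apply Integrable.mono' ((psi_integrableOn hβ hKσ hK₂ hR r).const_mul (K₁ + Kσ + K₂))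
    (((gt_cont hR).mul ((continuous_const.mul (G_cont hR)).rexp)).aestronglyMeasurable)
  rw [ae_restrict_iff' measurableSet_Ioi]
  refine ae_of_all _ fun s hs => ?_
  have hs0 : 0 ≤ s := hr.trans hs.out.le
  have h1 : |gammaTilde K₁ K₂ R Kσ s| ≤ (K₁ + Kσ + K₂) * s := by
    rw [abs_le]
    constructor
    · nlinarith [gt_lb hKσ hK₁ hK₂ hR hs0]
    · nlinarith [gt_ub hKσ hK₁ hK₂ hR hs0]
  show ‖gammaTilde K₁ K₂ R Kσ s * Real.exp ((1 / (2 * β)) * GFun K₁ K₂ R Kσ s)‖ ≤ (K₁ + Kσ + K₂) * psiF β K₁ K₂ R Kσ s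
  rw [norm_mul, Real.norm_eq_abs, Real.norm_eq_abs, abs_of_pos (Real.exp_pos _)]
  unfold psiF
  calc |gammaTilde K₁ K₂ R Kσ s| * Real.exp ((1 / (2 * β)) * GFun K₁ K₂ R Kσ s)
      ≤ ((K₁ + Kσ + K₂) * s) * Real.exp ((1 / (2 * β)) * GFun K₁ K₂ R Kσ s) :=
        mul_le_mul_of_nonneg_right h1 (Real.exp_pos _).le
    _ = (K₁ + Kσ + K₂) * (s * Real.exp ((1 / (2 * β)) * GFun K₁ K₂ R Kσ s)) := by ring

lemma int_gamma_exp_val (hβ : 0 < β) (hKσ : 0 ≤ Kσ) (hK₁ : 0 ≤ K₁) (hK₂ : Kσ < K₂) (hR : 0 < R)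
    {r : ℝ} (hr : 0 ≤ r) :
    (∫ s in Ioi r, gammaTilde K₁ K₂ R Kσ s * Real.exp ((1 / (2 * β)) * GFun K₁ K₂ R Kσ s)) =
      -(2 * β) * Real.exp ((1 / (2 * β)) * GFun K₁ K₂ R Kσ r) := by
  have hc : (0:ℝ) < 1 / (2 * β) := by positivity
  have hder : ∀ x : ℝ, HasDerivAt (fun s => (2 * β) * Real.exp ((1 / (2 * β)) * GFun K₁ K₂ R Kσ s))
      (gammaTilde K₁ K₂ R Kσ x * Real.exp ((1 / (2 * β)) * GFun K₁ K₂ R Kσ x)) x := by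
    intro x
    have h := (((G_hasDeriv (Kσ := Kσ) (K₁ := K₁) (K₂ := K₂) hR x).const_mul (1 / (2 * β))).exp).const_mul (2 * β)
    refine h.congr_deriv (Eq.symm ?_)
    field_simp
  have htend : Tendsto (fun s => (2 * β) * Real.exp ((1 / (2 * β)) * GFun K₁ K₂ R Kσ s))
      atTop (𝓝 0) := by
    simpa using (exp_G_tendsto (K₁ := K₁) hKσ hK₂ hR hc).const_mul (2 * β)
  have := integral_Ioi_of_hasDerivAt_of_tendsto (a := r)
    (hder r).continuousAt.continuousWithinAt (fun x _ => hder x)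
    (int_gamma_exp hβ hKσ hK₁ hK₂ hR hr) htend
  rw [this]
  ring

lemma key_ineq (hβ : 0 < β) (hKσ : 0 ≤ Kσ) (hK₁ : 0 ≤ K₁) (hK₂ : Kσ < K₂) (hR : 0 < R)
    {r : ℝ} (hr : 0 ≤ r) :
    -(2 * β) * r ≤ gammaTilde K₁ K₂ R Kσ r * PhiF β K₁ K₂ R Kσ r := by
  set E := Real.exp (-(1 / (2 * β)) * GFun K₁ K₂ R Kσ r) with hE
  have key : E * Real.exp ((1 / (2 * β)) * GFun K₁ K₂ R Kσ r) = 1 := by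
    rw [hE, ← Real.exp_add, show -(1 / (2 * β)) * GFun K₁ K₂ R Kσ r +
      (1 / (2 * β)) * GFun K₁ K₂ R Kσ r = 0 by ring, Real.exp_zero]
  have e1 : gammaTilde K₁ K₂ R Kσ r * PhiF β K₁ K₂ R Kσ r =
      ∫ s in Ioi r, (gammaTilde K₁ K₂ R Kσ r * E) * psiF β K₁ K₂ R Kσ s := by
    rw [MeasureTheory.integral_const_mul]
    unfold PhiF hF
    ring
  have e2 : (∫ s in Ioi r, (r * E) * (gammaTilde K₁ K₂ R Kσ s *
      Real.exp ((1 / (2 * β)) * GFun K₁ K₂ R Kσ s))) = -(2 * β) * r := by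
    rw [MeasureTheory.integral_const_mul, int_gamma_exp_val hβ hKσ hK₁ hK₂ hR hr]
    linear_combination (-(2 * β) * r) * key
  have mono : (∫ s in Ioi r, (r * E) * (gammaTilde K₁ K₂ R Kσ s *
        Real.exp ((1 / (2 * β)) * GFun K₁ K₂ R Kσ s))) ≤
      ∫ s in Ioi r, (gammaTilde K₁ K₂ R Kσ r * E) * psiF β K₁ K₂ R Kσ s := by
    apply setIntegral_mono_on
      ((int_gamma_exp hβ hKσ hK₁ hK₂ hR hr).const_mul _)
      ((psi_integrableOn hβ hKσ hK₂ hR r).const_mul _) measurableSet_Ioi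
    intro s hs
    have h1 := gt_ratio hKσ hK₁ hK₂ hR hr hs.out.le
    calc (r * E) * (gammaTilde K₁ K₂ R Kσ s * Real.exp ((1 / (2 * β)) * GFun K₁ K₂ R Kσ s))
        = (E * Real.exp ((1 / (2 * β)) * GFun K₁ K₂ R Kσ s)) *
          (r * gammaTilde K₁ K₂ R Kσ s) := by ring
      _ ≤ (E * Real.exp ((1 / (2 * β)) * GFun K₁ K₂ R Kσ s)) *
          (gammaTilde K₁ K₂ R Kσ r * s) := by
          apply mul_le_mul_of_nonneg_left h1
          rw [hE]
          positivity
      _ = (gammaTilde K₁ K₂ R Kσ r * E) * psiF β K₁ K₂ R Kσ s := by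
          unfold psiF
          ring
  rw [e1]
  rw [← e2]
  exact mono

lemma Phi_lb (hβ : 0 < β) (hKσ : 0 ≤ Kσ) (hK₁ : 0 ≤ K₁) (hK₂ : Kσ < K₂) (hR : 0 < R)
    {r : ℝ} (hr : 0 ≤ r) :
    2 * β / (K₂ - Kσ) ≤ PhiF β K₁ K₂ R Kσ r := by
  have hK : (0:ℝ) < K₂ - Kσ := sub_pos.mpr hK₂
  set b := (K₂ - Kσ) / (4 * β) with hb
  have hb0 : 0 < b := by rw [hb]; positivity
  set m : ℝ → ℝ := fun s => s * Real.exp (-b * s ^ 2 + b * r ^ 2) with hm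
  have hder : ∀ x : ℝ, HasDerivAt (fun s => -(2 * b)⁻¹ * Real.exp (-b * s ^ 2 + b * r ^ 2))
      (m x) x := by
    intro x
    have h := ((((hasDerivAt_pow 2 x).const_mul (-b)).add_const (b * r ^ 2)).exp).const_mul
      (-(2 * b)⁻¹)
    refine h.congr_deriv (Eq.symm ?_)
    rw [hm]
    field_simp
    ring
  have htend : Tendsto (fun s : ℝ => -(2 * b)⁻¹ * Real.exp (-b * s ^ 2 + b * r ^ 2))
      atTop (𝓝 (-(2 * b)⁻¹ * 0)) := by
    apply Tendsto.const_mul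
    apply Real.tendsto_exp_atBot.comp
    apply tendsto_atBot_add_const_right
    exact (tendsto_pow_atTop two_ne_zero).const_mul_atTop_of_neg (neg_lt_zero.2 hb0)
  have hm_nonneg : ∀ x ∈ Ioi r, 0 ≤ m x := fun x hx =>
    mul_nonneg (hr.trans hx.out.le) (Real.exp_pos _).le
  have hintm : IntegrableOn m (Ioi r) :=
    integrableOn_Ioi_deriv_of_nonneg' (fun x _ => hder x) hm_nonneg htend
  have hval : (∫ s in Ioi r, m s) = (2 * b)⁻¹ := by
    have h := integral_Ioi_of_hasDerivAt_of_tendsto' (fun x _ => hder x) hintm htend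
    rw [h, show -b * r ^ 2 + b * r ^ 2 = 0 by ring, Real.exp_zero]
    ring
  set E := Real.exp (-(1 / (2 * β)) * GFun K₁ K₂ R Kσ r) with hE
  have e1 : PhiF β K₁ K₂ R Kσ r = ∫ s in Ioi r, E * psiF β K₁ K₂ R Kσ s := by
    rw [MeasureTheory.integral_const_mul]
    unfold PhiF hF
    rfl
  have mono : (∫ s in Ioi r, m s) ≤ ∫ s in Ioi r, E * psiF β K₁ K₂ R Kσ s := by
    apply setIntegral_mono_on hintm ((psi_integrableOn hβ hKσ hK₂ hR r).const_mul _)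
      measurableSet_Ioi
    intro s hs
    have hs0 : 0 ≤ s := hr.trans hs.out.le
    have hG := G_diff_lb hKσ hK₁ hK₂ hR hr hs.out.le
    have hexp : -b * s ^ 2 + b * r ^ 2 ≤
        -(1 / (2 * β)) * GFun K₁ K₂ R Kσ r + (1 / (2 * β)) * GFun K₁ K₂ R Kσ s := by
      have h2 := mul_le_mul_of_nonneg_left hG (by positivity : (0:ℝ) ≤ 1 / (2 * β))
      have hβ' : (β:ℝ) ≠ 0 := ne_of_gt hβ
      rw [hb] at *
      calc -((K₂ - Kσ) / (4 * β)) * s ^ 2 + (K₂ - Kσ) / (4 * β) * r ^ 2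
          = 1 / (2 * β) * ((Kσ - K₂) * (s ^ 2 - r ^ 2) / 2) := by field_simp; ring
        _ ≤ 1 / (2 * β) * (GFun K₁ K₂ R Kσ s - GFun K₁ K₂ R Kσ r) := h2
        _ = -(1 / (2 * β)) * GFun K₁ K₂ R Kσ r + (1 / (2 * β)) * GFun K₁ K₂ R Kσ s := by ring
    calc m s = s * Real.exp (-b * s ^ 2 + b * r ^ 2) := rfl
      _ ≤ s * Real.exp (-(1 / (2 * β)) * GFun K₁ K₂ R Kσ r +
            (1 / (2 * β)) * GFun K₁ K₂ R Kσ s) :=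
          mul_le_mul_of_nonneg_left (Real.exp_le_exp.mpr hexp) hs0
      _ = E * psiF β K₁ K₂ R Kσ s := by
          rw [hE]
          unfold psiF
          rw [Real.exp_add]
          ring
  have : 2 * β / (K₂ - Kσ) = (2 * b)⁻¹ := by
    rw [hb]
    field_simp
    ring
  rw [this, ← hval, e1]
  exact mono


lemma dd_nonpos (hβ : 0 < β) (hKσ : 0 ≤ Kσ) (hK₁ : 0 ≤ K₁) (hK₂ : Kσ < K₂) (hR : 0 < R)
    {x : ℝ} (hx : 0 ≤ x) :
    -(1 / (2 * β)) * gammaTilde K₁ K₂ R Kσ x * PhiF β K₁ K₂ R Kσ x - x ≤ 0 := by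
  have hc0 : (0:ℝ) < 1 / (2 * β) := by positivity
  have hk := key_ineq hβ hKσ hK₁ hK₂ hR hx
  have h1 := mul_le_mul_of_nonneg_left hk (le_of_lt hc0)
  have h2 : (1 / (2 * β)) * (-(2 * β) * x) = -x := by field_simp
  rw [h2] at h1
  nlinarith [h1]


end

/-- `f'' ≤ 0` on `(0,∞)`, `f` is concave on `[0,∞)`, and
`(2β/(K₂−K_σ)) r ≤ f(r) ≤ f'(0) r` for all `r ≥ 0`. -/
theorem stmt_9 (β Kσ K₁ K₂ R : ℝ) (hβ : 0 < β) (hKσ : 0 ≤ Kσ) (hK₁ : 0 ≤ K₁)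
    (hK₂ : Kσ < K₂) (hR : 0 < R) :
    (∀ r : ℝ, 0 < r → deriv (deriv (refF β K₁ K₂ R Kσ)) r ≤ 0) ∧
      ConcaveOn ℝ (Ici 0) (refF β K₁ K₂ R Kσ) ∧
      ∀ r : ℝ, 0 ≤ r →
        2 * β / (K₂ - Kσ) * r ≤ refF β K₁ K₂ R Kσ r ∧
          refF β K₁ K₂ R Kσ r ≤ deriv (refF β K₁ K₂ R Kσ) 0 * r := by
  have hΦd := Phi_hasDeriv (β := β) (Kσ := Kσ) (K₁ := K₁) (K₂ := K₂) (R := R) hβ hKσ hK₂ hR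
  have hfd := refF_hasDeriv (β := β) (Kσ := Kσ) (K₁ := K₁) (K₂ := K₂) (R := R) hβ hKσ hK₂ hR
  have hΦdiff : Differentiable ℝ (PhiF β K₁ K₂ R Kσ) := fun u => (hΦd u).differentiableAt
  have hΦcont : Continuous (PhiF β K₁ K₂ R Kσ) := hΦdiff.continuous
  have hfdiff : Differentiable ℝ (refF β K₁ K₂ R Kσ) := fun u => (hfd u).differentiableAt
  have hderiv : deriv (refF β K₁ K₂ R Kσ) = PhiF β K₁ K₂ R Kσ := funext fun r => (hfd r).deriv
  have hderiv2 : ∀ r : ℝ, deriv (deriv (refF β K₁ K₂ R Kσ)) r =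
      -(1 / (2 * β)) * gammaTilde K₁ K₂ R Kσ r * PhiF β K₁ K₂ R Kσ r - r := by
    intro r
    rw [hderiv]
    exact (hΦd r).deriv
  have part1 : ∀ r : ℝ, 0 ≤ r → deriv (deriv (refF β K₁ K₂ R Kσ)) r ≤ 0 := by
    intro r hr
    rw [hderiv2 r]
    exact dd_nonpos hβ hKσ hK₁ hK₂ hR hr
  have hrfl : refF β K₁ K₂ R Kσ = fun r => ∫ u in (0:ℝ)..r, PhiF β K₁ K₂ R Kσ u := rfl
  have hanti : AntitoneOn (PhiF β K₁ K₂ R Kσ) (Ici 0) := by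
    apply antitoneOn_of_deriv_nonpos (convex_Ici 0) hΦcont.continuousOn
      (fun x _ => (hΦdiff x).differentiableWithinAt)
    intro x hx
    rw [interior_Ici] at hx
    rw [(hΦd x).deriv]
    exact dd_nonpos hβ hKσ hK₁ hK₂ hR hx.le
  refine ⟨fun r hr => part1 r hr.le, ?_, ?_⟩
  · apply concaveOn_of_deriv2_nonpos (convex_Ici 0) hfdiff.continuous.continuousOn
      (fun x _ => (hfdiff x).differentiableWithinAt)
    · rw [hderiv]
      exact fun x _ => (hΦdiff x).differentiableWithinAt
    · intro x hx
      rw [interior_Ici] at hx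
      exact part1 x hx.le
  · intro r hr
    constructor
    · have hmono := intervalIntegral.integral_mono_on (μ := volume) hr
        (intervalIntegrable_const (c := 2 * β / (K₂ - Kσ)))
        (hΦcont.intervalIntegrable 0 r)
        (fun u hu => Phi_lb hβ hKσ hK₁ hK₂ hR hu.1)
      rw [intervalIntegral.integral_const, smul_eq_mul] at hmono
      rw [hrfl]
      calc 2 * β / (K₂ - Kσ) * r = (r - 0) * (2 * β / (K₂ - Kσ)) := by ring
        _ ≤ ∫ u in (0:ℝ)..r, PhiF β K₁ K₂ R Kσ u := hmono
    · have hmono := intervalIntegral.integral_mono_on (μ := volume) hr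
        (hΦcont.intervalIntegrable 0 r)
        (intervalIntegrable_const (c := PhiF β K₁ K₂ R Kσ 0))
        (fun u hu => hanti self_mem_Ici hu.1 hu.1)
      rw [intervalIntegral.integral_const, smul_eq_mul] at hmono
      rw [hderiv, hrfl]
      calc (∫ u in (0:ℝ)..r, PhiF β K₁ K₂ R Kσ u) ≤ (r - 0) * PhiF β K₁ K₂ R Kσ 0 := hmono
        _ = PhiF β K₁ K₂ R Kσ 0 * r := by ring
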